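/- Let ε > 0, k_x > 0, k_y ≠ 0 be real numbers and let C = 2√(1 + k_x²/(ε|k_y|)). Then for every ν > 0 and every real η, one has (1 + η²) / |1 + √(1 − (2εk_y/k_x²)η + 2iεν k_y²/k_x²)|⁴ ≤ C⁴/16, where √ is the principal complex square root. -/

import Mathlib

open Complex

theorem stmt_2 (ε kx ky : ℝ) (hε : 0 < ε) (hkx : 0 < kx) (hky : ky ≠ 0)
    (C : ℝ) (hC : C = 2 * Real.sqrt (1 + kx ^ 2 / (ε * |ky|)))
    (ν : ℝ) (hν : 0 < ν) (η : ℝ) :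
    (1 + η ^ 2) /
      ‖(1 + ((1 : ℂ) - (2 * ε * ky / kx ^ 2 : ℝ) * (η : ℂ)
          + 2 * (ε : ℂ) * (ν : ℂ) * (ky : ℂ) ^ 2 / (kx : ℂ) ^ 2 * I) ^ ((1 : ℂ) / 2))‖ ^ 4
      ≤ C ^ 4 / 16 := by
  have hkyabs : 0 < |ky| := abs_pos.mpr hky
  set a : ℝ := 2 * ε * ky / kx ^ 2 with ha
  set b : ℝ := 2 * ε * ν * ky ^ 2 / kx ^ 2 with hb
  have hbpos : 0 < b := by positivity
  set z : ℂ := 1 - (a : ℂ) * η + (b : ℂ) * I with hz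
  have hzeq : (1 : ℂ) - (a : ℝ) * (η : ℂ)
      + 2 * (ε : ℂ) * (ν : ℂ) * (ky : ℂ) ^ 2 / (kx : ℂ) ^ 2 * I = z := by
    rw [hz, hb]; push_cast; ring
  rw [hzeq]
  have hzre : z.re = 1 - a * η := by simp [hz]
  have hzim : z.im = b := by simp [hz]
  have hz0 : z ≠ 0 := by
    intro h
    rw [h] at hzim
    simp at hzim
    exact hbpos.ne' hzim.symm
  set w : ℂ := z ^ ((1 : ℂ) / 2) with hw
  have hw2 : w ^ 2 = z := by
    rw [hw, one_div]
    exact_mod_cast Complex.cpow_nat_inv_pow z (two_ne_zero)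
  have habsw : ‖w‖ ^ 2 = ‖z‖ := by
    rw [← norm_pow, hw2]
  -- Re w ≥ 0
  have hrew : 0 ≤ w.re := by
    rw [hw, Complex.cpow_def_of_ne_zero hz0]
    rw [Complex.exp_re]
    apply mul_nonneg (Real.exp_nonneg _)
    apply Real.cos_nonneg_of_mem_Icc
    have him : (Complex.log z * (1 / 2)).im = z.arg / 2 := by
      simp [Complex.log_im]
      ring
    rw [him]
    constructor
    · have := Complex.neg_pi_lt_arg z
      linarith
    · have := Complex.arg_le_pi z
      have hpi := Real.pi_pos
      linarith
  -- abs (1+w)^2 ≥ 1 + abs z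
  have hD : 1 + ‖z‖ ≤ ‖1 + w‖ ^ 2 := by
    have h1 : ‖1 + w‖ ^ 2 = (1 + w.re) ^ 2 + w.im ^ 2 := by
      rw [Complex.sq_norm, Complex.normSq_apply]
      simp
      ring
    have h2 : ‖w‖ ^ 2 = w.re ^ 2 + w.im ^ 2 := by
      rw [Complex.sq_norm, Complex.normSq_apply]; ring
    rw [h1]
    nlinarith [habsw, hrew]
  have habsz : |1 - a * η| ≤ ‖z‖ := by
    have := Complex.abs_re_le_norm z
    rwa [hzre] at this
  clear_value w
  clear_value z
  set D : ℝ := ‖1 + w‖ with hDdef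
  clear_value D
  set A : ℝ := ‖z‖ with hAdef
  clear_value A
  clear_value a
  clear_value b
  clear hzeq hw hw2 hz hzre hzim hz0 habsw hrew hDdef hAdef w z
  set K : ℝ := kx ^ 2 / (ε * |ky|) with hK
  clear_value K
  have hKpos : 0 < K := by rw [hK]; positivity
  have hC4 : C ^ 4 / 16 = (1 + K) ^ 2 := by
    rw [hC]
    have h1K : (0:ℝ) ≤ 1 + K := by linarith
    have : Real.sqrt (1 + K) ^ 2 = 1 + K := Real.sq_sqrt h1K
    nlinarith [this]
  rw [hC4]
  have hKa : K * |a| = 2 := by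
    have haabs : |a| = 2 * ε * |ky| / kx ^ 2 := by
      rw [ha, abs_div, abs_mul, abs_mul]
      rw [abs_of_pos hε, abs_of_pos (by norm_num : (0:ℝ) < 2),
        abs_of_pos (by positivity : (0:ℝ) < kx ^ 2)]
    rw [hK, haabs]
    field_simp
  -- key real inequality
  set u : ℝ := |1 - a * η| with hu
  clear_value u
  have hu0 : 0 ≤ u := hu ▸ abs_nonneg _
  have hua : 2 * |η| - K ≤ K * u := by
    have h1 : |a * η| - 1 ≤ u := by
      have h2 : |a * η| ≤ |1 - a * η| + 1 := by
        calc |a * η| = |(a * η - 1) + 1| := by ring_nf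
          _ ≤ |a * η - 1| + 1 := by
            simpa using abs_add_le (a * η - 1) 1
          _ = |1 - a * η| + 1 := by rw [abs_sub_comm]
      linarith
    have h2 : K * (|a * η| - 1) ≤ K * u := by
      exact mul_le_mul_of_nonneg_left h1 hKpos.le
    have h3 : K * |a * η| = 2 * |η| := by
      rw [abs_mul, ← mul_assoc, hKa]
    nlinarith
  have hkey : 1 + |η| ≤ (1 + K) * (1 + u) := by
    have hη : 0 ≤ |η| := abs_nonneg _
    have hexp : (1 + K) * (1 + u) = 1 + u + K + K * u := by ring
    linarith
  -- conclude
  have hApos : 0 ≤ A := le_trans hu0 habsz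
  have hD2pos : (0:ℝ) < D ^ 2 := by linarith
  have hD4 : ((1 + K) * (1 + u)) ^ 2 ≤ (1 + K) ^ 2 * D ^ 4 := by
    have h1 : 1 + u ≤ D ^ 2 := by linarith
    have h2 : (1 + u) ^ 2 ≤ (D ^ 2) ^ 2 :=
      pow_le_pow_left₀ (by linarith) h1 2
    calc ((1 + K) * (1 + u)) ^ 2 = (1 + K) ^ 2 * (1 + u) ^ 2 := by ring
      _ ≤ (1 + K) ^ 2 * (D ^ 2) ^ 2 :=
        mul_le_mul_of_nonneg_left h2 (by positivity)
      _ = (1 + K) ^ 2 * D ^ 4 := by ring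
  have hDne : D ≠ 0 := by
    intro h
    rw [h] at hD2pos
    simp at hD2pos
  rw [div_le_iff₀ (by positivity : (0:ℝ) < D ^ 4)]
  have hη2 : 1 + η ^ 2 ≤ (1 + |η|) ^ 2 := by
    nlinarith [abs_nonneg η, _root_.sq_abs η]
  calc 1 + η ^ 2 ≤ (1 + |η|) ^ 2 := hη2
    _ ≤ ((1 + K) * (1 + u)) ^ 2 := pow_le_pow_left₀ (by positivity) hkey 2
    _ ≤ (1 + K) ^ 2 * D ^ 4 := hD4
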